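/- Let C_0 be an [n,t] code over F_q with generator matrix G_0 and let Ĉ be an [n,s] subcode of C_0 with generator matrix Ĝ. Suppose s < k < t and for every S ⊆ [n] with |S| = k, rank(G_0|_S) = k implies rank(Ĝ|_S) = s. If q > C(n,k) (binomial coefficient), then there exists an [n,k] code C with Ĉ ⊆ C ⊆ C_0 such that C is a maximally recoverable subcode of C_0. -/

import Mathlib

open Matrix

section Defs
variable {F : Type*} [Field F]

/-- Rank of the submatrix of `G` consisting of the columns indexed by `S`. -/
noncomputable def colRank {m α : Type*} [Fintype α] (G : Matrix m α F) (S : Finset α) : ℕ :=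
  (G.submatrix id (fun j : S => (j : α))).rank

/-- The row space of a matrix. -/
def rowSpan {m α : Type*} (G : Matrix m α F) : Submodule F (α → F) :=
  Submodule.span F (Set.range fun i => G i)

/-- Rank of the restriction (puncturing) of a code `C` to the coordinates in `S`. -/
noncomputable def restrRank {α : Type*} (C : Submodule F (α → F)) (S : Finset α) : ℕ :=
  Module.finrank F (C.map (LinearMap.funLeft F F (fun j : S => (j : α))))

/-- Shortening of a code on coordinates `α ⊕ β` to the coordinates `α`. -/
noncomputable def shortenSum {α β : Type*} (D : Submodule F ((α ⊕ β) → F)) :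
    Submodule F (α → F) :=
  Submodule.map (LinearMap.funLeft F F Sum.inl)
    (D ⊓ (⨅ j : β, LinearMap.ker
      (LinearMap.proj (R := F) (Sum.inr j) : ((α ⊕ β) → F) →ₗ[F] F)))

/-- A valid (zero-error, worst case) scheme for the point-to-point function-update problem. -/
def IsValidScheme [DecidableEq F] {n m ℓ : ℕ} (A : Matrix (Fin m) (Fin n) F)
    (H : Matrix (Fin ℓ) (Fin n) F) (ε : ℕ)
    (D : (Fin ℓ → F) → (Fin m → F) → (Fin m → F)) : Prop :=
  ∀ X E : Fin n → F, hammingNorm E ≤ ε →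
    D (H.mulVec (X + E)) (A.mulVec X) = A.mulVec (X + E)

end Defs

section AuxLemmas
open MvPolynomial
variable {F : Type*} [Field F]

lemma aux_rank_submatrix_col_equiv {m α β : Type*} [Fintype m] [Fintype α] [Fintype β]
    (A : Matrix m α F) (e : β ≃ α) : (A.submatrix id e).rank = A.rank := by
  rw [Matrix.rank_eq_finrank_span_cols, Matrix.rank_eq_finrank_span_cols]
  have h : (A.submatrix id ⇑e).col = A.col ∘ e := rfl
  rw [h, Set.range_comp, e.surjective.range_eq, Set.image_univ]

lemma aux_rank_submatrix_equiv {m m' α β : Type*} [Fintype m] [Fintype m'] [Fintype α]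
    [Fintype β] (A : Matrix m α F) (e1 : m' ≃ m) (e2 : β ≃ α) :
    (A.submatrix e1 e2).rank = A.rank := by
  have h1 : A.submatrix ⇑e1 ⇑e2 = (A.submatrix e1 id).submatrix id e2 := rfl
  rw [h1, aux_rank_submatrix_col_equiv]
  have h2 : A.submatrix ⇑e1 id = (Aᵀ.submatrix id e1)ᵀ := rfl
  rw [h2, Matrix.rank_transpose, aux_rank_submatrix_col_equiv, Matrix.rank_transpose]

lemma aux_rank_submatrix_col_le {m α β : Type*} [Fintype m] [Fintype α] [Fintype β]
    (A : Matrix m α F) (f : β → α) : (A.submatrix id f).rank ≤ A.rank := by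
  rw [Matrix.rank_eq_finrank_span_cols, Matrix.rank_eq_finrank_span_cols]
  apply Submodule.finrank_mono
  apply Submodule.span_mono
  rintro _ ⟨b, rfl⟩
  exact ⟨f b, rfl⟩

lemma aux_colRank_eq_finrank {m : Type*} [Fintype m] {nn : ℕ} (G : Matrix m (Fin nn) F)
    (S : Finset (Fin nn)) :
    colRank G S =
      Module.finrank F (Submodule.span F (Set.range fun j : S => Gᵀ (j : Fin nn))) := by
  rw [colRank, Matrix.rank_eq_finrank_span_cols]
  rfl

lemma aux_colRank_of_li {m : Type*} [Fintype m] {nn : ℕ} {G : Matrix m (Fin nn) F}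
    {S : Finset (Fin nn)} (h : LinearIndependent F fun j : S => Gᵀ (j : Fin nn)) :
    colRank G S = S.card := by
  rw [aux_colRank_eq_finrank, finrank_span_eq_card h, Fintype.card_coe]

lemma aux_rows_li {m α : Type*} [Fintype m] [Fintype α] (A : Matrix m α F)
    (h : A.rank = Fintype.card m) : LinearIndependent F A := by
  change LinearIndependent F A.row
  rw [linearIndependent_iff_card_eq_finrank_span, Set.finrank, ← Matrix.rank_eq_finrank_span_row, h]

lemma aux_det_ne_zero {m : Type*} [Fintype m] [DecidableEq m] (A : Matrix m m F)
    (h : LinearIndependent F A) : A.det ≠ 0 := by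
  intro h0
  obtain ⟨v, hv, hv0⟩ := Matrix.exists_vecMul_eq_zero_iff.mpr h0
  apply hv
  have hsum : ∑ i, v i • A i = 0 := by
    funext j
    have := congrFun hv0 j
    simpa [Matrix.vecMul, dotProduct] using this
  exact funext (Fintype.linearIndependent_iff.mp h v hsum)

lemma aux_rank_of_det_ne_zero {m : Type*} [Fintype m] [DecidableEq m] (A : Matrix m m F)
    (h : A.det ≠ 0) : A.rank = Fintype.card m :=
  Matrix.rank_of_isUnit A (by rwa [Matrix.isUnit_iff_isUnit_det, isUnit_iff_ne_zero])

variable {n t s r : ℕ}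

/-- Polynomial row family: first `s` rows are `Ghat`, last `r` rows are generic
combinations of the rows of `G0` with variable coefficients. -/
noncomputable def auxRowP (G0 : Matrix (Fin t) (Fin n) F) (Ghat : Matrix (Fin s) (Fin n) F) :
    Fin s ⊕ Fin r → Fin n → MvPolynomial (Fin r × Fin t) F
  | Sum.inl i => fun j => MvPolynomial.C (Ghat i j)
  | Sum.inr i => fun j => ∑ l, MvPolynomial.X (i, l) * MvPolynomial.C (G0 l j)

/-- Evaluated row family. -/
noncomputable def auxRow (G0 : Matrix (Fin t) (Fin n) F) (Ghat : Matrix (Fin s) (Fin n) F)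
    (x : Fin r × Fin t → F) : Fin s ⊕ Fin r → Fin n → F
  | Sum.inl i => fun j => Ghat i j
  | Sum.inr i => fun j => ∑ l, x (i, l) * G0 l j

lemma auxRow_eval (G0 : Matrix (Fin t) (Fin n) F) (Ghat : Matrix (Fin s) (Fin n) F)
    (x : Fin r × Fin t → F) (u : Fin s ⊕ Fin r) (j : Fin n) :
    MvPolynomial.eval x (auxRowP G0 Ghat u j) = auxRow G0 Ghat x u j := by
  cases u <;> simp [auxRowP, auxRow]

lemma auxRowP_degreeOf (G0 : Matrix (Fin t) (Fin n) F) (Ghat : Matrix (Fin s) (Fin n) F)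
    (u : Fin s ⊕ Fin r) (j : Fin n) (i0 : Fin r) (l0 : Fin t) :
    MvPolynomial.degreeOf (i0, l0) (auxRowP G0 Ghat u j) ≤
      if u = Sum.inr i0 then 1 else 0 := by
  classical
  cases u with
  | inl i => simp [auxRowP]
  | inr i =>
    refine le_trans (MvPolynomial.degreeOf_sum_le _ _ _) ?_
    rw [Finset.sup_le_iff]
    intro l _
    refine le_trans (MvPolynomial.degreeOf_mul_le _ _ _) ?_
    rw [MvPolynomial.degreeOf_C, add_zero, MvPolynomial.degreeOf_X]
    by_cases h : i = i0
    · subst h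
      rw [if_pos rfl]
      split <;> simp
    · have h1 : (Sum.inr i : Fin s ⊕ Fin r) ≠ Sum.inr i0 := by simp [h]
      have h2 : ((i0, l0) : Fin r × Fin t) ≠ (i, l) := by
        simp [Prod.ext_iff, Ne.symm h]
      rw [if_neg h1, if_neg h2]

lemma aux_degreeOf_neg {σ R : Type*} [CommRing R] (v : σ) (p : MvPolynomial σ R) :
    MvPolynomial.degreeOf v (-p) = MvPolynomial.degreeOf v p := by
  rw [MvPolynomial.degreeOf_eq_sup, MvPolynomial.degreeOf_eq_sup, MvPolynomial.support_neg]

lemma auxRowP_det_degreeOf (G0 : Matrix (Fin t) (Fin n) F) (Ghat : Matrix (Fin s) (Fin n) F)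
    {ι : Type*} [Fintype ι] [DecidableEq ι] (f : ι → Fin s ⊕ Fin r)
    (hf : Function.Injective f) (g : ι → Fin n) (v : Fin r × Fin t) :
    MvPolynomial.degreeOf v
      (Matrix.det (Matrix.of fun a b => auxRowP G0 Ghat (f a) (g b))) ≤ 1 := by
  classical
  obtain ⟨i0, l0⟩ := v
  rw [Matrix.det_apply]
  refine le_trans (MvPolynomial.degreeOf_sum_le _ _ _) ?_
  rw [Finset.sup_le_iff]
  intro σ _
  have hsgn : MvPolynomial.degreeOf (i0, l0)
      (Equiv.Perm.sign σ • ∏ b, (Matrix.of fun a b => auxRowP G0 Ghat (f a) (g b)) (σ b) b) =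
      MvPolynomial.degreeOf (i0, l0)
      (∏ b, (Matrix.of fun a b => auxRowP G0 Ghat (f a) (g b)) (σ b) b) := by
    rcases Int.units_eq_one_or (Equiv.Perm.sign σ) with h | h <;> rw [h]
    · rw [one_smul]
    · rw [Units.smul_def]
      push_cast
      rw [neg_one_zsmul, aux_degreeOf_neg]
  rw [hsgn]
  refine le_trans (MvPolynomial.degreeOf_prod_le _ _ _) ?_
  have hb : ∀ b : ι, MvPolynomial.degreeOf (i0, l0)
      ((Matrix.of fun a b => auxRowP G0 Ghat (f a) (g b)) (σ b) b) ≤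
      if f (σ b) = Sum.inr i0 then 1 else 0 := fun b =>
    auxRowP_degreeOf G0 Ghat (f (σ b)) (g b) i0 l0
  refine le_trans (Finset.sum_le_sum fun b _ => hb b) ?_
  rw [← Finset.card_filter]
  apply Finset.card_le_one.mpr
  intro a ha b hbmem
  rw [Finset.mem_filter] at ha hbmem
  exact σ.injective (hf (ha.2.trans hbmem.2.symm))

end AuxLemmas

section AuxDefs
variable {F : Type*} [Field F] {n t s r : ℕ}

/-- Column selection map: enumerate the elements of a `k`-set `S` by `Fin s ⊕ Fin r`. -/
noncomputable def auxCol {k : ℕ} (hsr : s + r = k) (j0 : Fin n) (S : Finset (Fin n))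
    (u : Fin s ⊕ Fin r) : Fin n :=
  if hS : S.card = k then
    ((((S.equivFin.trans (finCongr hS)).trans
        (finSumFinEquiv.trans (finCongr hsr)).symm).symm u : S) : Fin n)
  else j0

/-- The polynomial attached to a set `S`: the determinant of the generic square submatrix. -/
noncomputable def auxPoly (G0 : Matrix (Fin t) (Fin n) F) (Ghat : Matrix (Fin s) (Fin n) F)
    {k : ℕ} (hsr : s + r = k) (j0 : Fin n) (S : Finset (Fin n)) :
    MvPolynomial (Fin r × Fin t) F :=
  (Matrix.of fun a b : Fin s ⊕ Fin r => auxRowP G0 Ghat a (auxCol hsr j0 S b)).det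

/-- The generic generator matrix. -/
noncomputable def auxG (G0 : Matrix (Fin t) (Fin n) F) (Ghat : Matrix (Fin s) (Fin n) F)
    {k : ℕ} (hsr : s + r = k) (x : Fin r × Fin t → F) : Matrix (Fin k) (Fin n) F :=
  Matrix.of fun a j => auxRow G0 Ghat x ((finSumFinEquiv.trans (finCongr hsr)).symm a) j

lemma auxPoly_degreeOf (G0 : Matrix (Fin t) (Fin n) F) (Ghat : Matrix (Fin s) (Fin n) F)
    {k : ℕ} (hsr : s + r = k) (j0 : Fin n) (S : Finset (Fin n)) (v : Fin r × Fin t) :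
    MvPolynomial.degreeOf v (auxPoly G0 Ghat hsr j0 S) ≤ 1 := by
  classical
  exact auxRowP_det_degreeOf G0 Ghat id Function.injective_id (auxCol hsr j0 S) v

lemma auxPoly_eval (G0 : Matrix (Fin t) (Fin n) F) (Ghat : Matrix (Fin s) (Fin n) F)
    {k : ℕ} (hsr : s + r = k) (j0 : Fin n) (S : Finset (Fin n)) (x : Fin r × Fin t → F) :
    MvPolynomial.eval x (auxPoly G0 Ghat hsr j0 S) =
      (Matrix.of fun a b : Fin s ⊕ Fin r =>
        auxRow G0 Ghat x a (auxCol hsr j0 S b)).det := by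
  rw [auxPoly, RingHom.map_det]
  congr 1
  ext a b
  simp [Matrix.map_apply, auxRow_eval]

lemma auxG_colRank (G0 : Matrix (Fin t) (Fin n) F) (Ghat : Matrix (Fin s) (Fin n) F)
    {k : ℕ} (hsr : s + r = k) (j0 : Fin n) (x : Fin r × Fin t → F) (S : Finset (Fin n))
    (hS : S.card = k) :
    colRank (auxG G0 Ghat hsr x) S =
      (Matrix.of fun a b : Fin s ⊕ Fin r => auxRow G0 Ghat x a (auxCol hsr j0 S b)).rank := by
  have hQ : (Matrix.of fun a b : Fin s ⊕ Fin r => auxRow G0 Ghat x a (auxCol hsr j0 S b)) =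
      ((auxG G0 Ghat hsr x).submatrix id (fun j : S => (j : Fin n))).submatrix
        (finSumFinEquiv.trans (finCongr hsr))
        ((S.equivFin.trans (finCongr hS)).trans
          (finSumFinEquiv.trans (finCongr hsr)).symm).symm := by
    ext a b
    simp [auxG, auxCol, dif_pos hS, Matrix.submatrix_apply, Equiv.symm_apply_apply]
  rw [colRank, hQ, aux_rank_submatrix_equiv]

end AuxDefs
/-- existence of sandwiched MRSCs: under the necessary rank condition
on `Ĝ` and `q > C(n,k)`, there is an `[n,k]` MRSC `C` of `C₀` with `Ĉ ⊆ C ⊆ C₀`. -/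
theorem sandwiched_mrsc_exists {F : Type*} [Field F] [Fintype F] {n t s k : ℕ}
    (hsk : s < k) (hkt : k < t)
    (G0 : Matrix (Fin t) (Fin n) F) (hG0 : G0.rank = t)
    (Ghat : Matrix (Fin s) (Fin n) F) (hGhat : Ghat.rank = s)
    (hsub : ∀ i, Ghat i ∈ rowSpan G0)
    (hnec : ∀ S : Finset (Fin n), S.card = k → colRank G0 S = k → colRank Ghat S = s)
    (hq : n.choose k < Fintype.card F) :
    ∃ G : Matrix (Fin k) (Fin n) F, G.rank = k ∧
      (∀ i, Ghat i ∈ rowSpan G) ∧ (∀ i, G i ∈ rowSpan G0) ∧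
      ∀ S : Finset (Fin n), S.card = k → colRank G0 S = k → colRank G S = k := by
  classical
  set r := k - s with hrdef
  have hsr : s + r = k := Nat.add_sub_cancel' hsk.le
  have htn : t ≤ n := by
    have h1 := Matrix.rank_le_card_width G0
    rw [hG0, Fintype.card_fin] at h1; exact h1
  have hn : 0 < n := by omega
  set j0 : Fin n := ⟨0, hn⟩ with hj0
  -- the collection of good sets
  set 𝒮 : Finset (Finset (Fin n)) :=
    Finset.univ.filter (fun S => S.card = k ∧ colRank G0 S = k) with h𝒮
  have h𝒮card : 𝒮.card ≤ n.choose k := by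
    have hsub' : 𝒮 ⊆ Finset.univ.powersetCard k := by
      intro S hS
      rw [h𝒮, Finset.mem_filter] at hS
      rw [Finset.mem_powersetCard]
      exact ⟨Finset.subset_univ _, hS.2.1⟩
    calc 𝒮.card ≤ (Finset.univ.powersetCard k).card := Finset.card_le_card hsub'
      _ = n.choose k := by
          rw [Finset.card_powersetCard, Finset.card_univ, Fintype.card_fin]
  -- Step 1: each polynomial attached to a good set is somewhere nonzero
  have hstep1 : ∀ S : Finset (Fin n), S.card = k → colRank G0 S = k →
      ∃ x : Fin r × Fin t → F,
        MvPolynomial.eval x (auxPoly G0 Ghat hsr j0 S) ≠ 0 := by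
    intro S hS hrkS
    have hcardS : Fintype.card S = k := by rw [Fintype.card_coe, hS]
    -- the rows of `Ghat` restricted to `S` are linearly independent
    have hGhS_li : LinearIndependent F (Ghat.submatrix id (fun j : S => (j : Fin n))) := by
      apply aux_rows_li
      have h1 := hnec S hS hrkS
      rw [colRank] at h1
      rw [Fintype.card_fin]
      exact h1
    -- the rows of `G0` restricted to `S` span everything
    have hspan : Submodule.span F
        (Set.range (G0.submatrix id (fun j : S => (j : Fin n)))) = ⊤ := by
      apply Submodule.eq_top_of_finrank_eq
      change Module.finrank F (Submodule.span F
        (Set.range (G0.submatrix id (fun j : S => (j : Fin n))).row)) = _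
      rw [← Matrix.rank_eq_finrank_span_row, Module.finrank_fintype_fun_eq_card, hcardS]
      rw [colRank] at hrkS
      exact hrkS
    -- complement of the span of the `Ghat` rows
    obtain ⟨W', hW'⟩ := Submodule.exists_isCompl
      (Submodule.span F (Set.range (Ghat.submatrix id (fun j : S => (j : Fin n)))))
    have hfinW : Module.finrank F
        (Submodule.span F (Set.range (Ghat.submatrix id (fun j : S => (j : Fin n))))) = s := by
      rw [finrank_span_eq_card hGhS_li, Fintype.card_fin]
    have hfinW' : Module.finrank F W' = r := by
      have h1 := Submodule.finrank_add_eq_of_isCompl hW'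
      rw [hfinW, Module.finrank_fintype_fun_eq_card, hcardS] at h1
      omega
    let bW' := Module.finBasisOfFinrankEq F W' hfinW'
    -- coefficients expressing the complement basis in terms of the rows of `G0`
    have hc : ∀ i : Fin r, ∃ c : Fin t → F,
        ∑ l, c l • (G0.submatrix id (fun j : S => (j : Fin n))) l = (bW' i : ↥S → F) := by
      intro i
      apply (Submodule.mem_span_range_iff_exists_fun F).mp
      rw [hspan]
      trivial
    choose c hc using hc
    refine ⟨fun q => c q.1 q.2, ?_⟩
    rw [auxPoly_eval]
    -- the combined family of vectors is linearly independent
    have hVli : LinearIndependent F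
        (Sum.elim (Ghat.submatrix id (fun j : S => (j : Fin n)))
          (fun i => (bW' i : ↥S → F))) := by
      apply LinearIndependent.sum_type hGhS_li
      · exact (bW'.linearIndependent).map' W'.subtype W'.ker_subtype
      · refine Disjoint.mono_right ?_ hW'.disjoint
        apply Submodule.span_le.mpr
        rintro _ ⟨i, rfl⟩
        exact (bW' i).2
    apply aux_det_ne_zero
    have hQV : (Matrix.of fun a b : Fin s ⊕ Fin r =>
        auxRow G0 Ghat (fun q => c q.1 q.2) a (auxCol hsr j0 S b)) =
        fun a => (LinearMap.funLeft F F (fun u : Fin s ⊕ Fin r =>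
          (((S.equivFin.trans (finCongr hS)).trans
            (finSumFinEquiv.trans (finCongr hsr)).symm).symm u : S)))
          ((Sum.elim (Ghat.submatrix id (fun j : S => (j : Fin n)))
            (fun i => (bW' i : ↥S → F))) a) := by
      funext a b
      have hcol : auxCol hsr j0 S b =
          ((((S.equivFin.trans (finCongr hS)).trans
            (finSumFinEquiv.trans (finCongr hsr)).symm).symm b : S) : Fin n) := by
        rw [auxCol, dif_pos hS]
      cases a with
      | inl i =>
        simp only [Matrix.of_apply, Sum.elim_inl, LinearMap.funLeft_apply, hcol]
        simp [auxRow, Matrix.submatrix_apply]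
        rfl
      | inr i =>
        simp only [Matrix.of_apply, Sum.elim_inr, LinearMap.funLeft_apply, hcol]
        have h2 := congrFun (hc i)
          (((S.equivFin.trans (finCongr hS)).trans
            (finSumFinEquiv.trans (finCongr hsr)).symm).symm b)
        simp only [Finset.sum_apply, Pi.smul_apply, smul_eq_mul, Matrix.submatrix_apply,
          id_eq] at h2
        show _ = (bW' i : ↥S → F) _
        rw [← h2]
        simp [auxRow]
    rw [hQV]
    have hker : LinearMap.ker (LinearMap.funLeft F F (fun u : Fin s ⊕ Fin r =>
        (((S.equivFin.trans (finCongr hS)).trans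
          (finSumFinEquiv.trans (finCongr hsr)).symm).symm u : S))) = ⊥ := by
      apply LinearMap.ker_eq_bot.mpr
      apply LinearMap.funLeft_injective_of_surjective
      exact ((S.equivFin.trans (finCongr hS)).trans
        (finSumFinEquiv.trans (finCongr hsr)).symm).symm.surjective
    exact hVli.map' _ hker
  -- Step 2: find a common evaluation point
  set P : MvPolynomial (Fin r × Fin t) F := ∏ S ∈ 𝒮, auxPoly G0 Ghat hsr j0 S with hP
  have hPne : P ≠ 0 := by
    rw [hP, Finset.prod_ne_zero_iff]
    intro S hSmem
    rw [h𝒮, Finset.mem_filter] at hSmem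
    obtain ⟨x, hx⟩ := hstep1 S hSmem.2.1 hSmem.2.2
    intro h0; rw [h0] at hx; simp at hx
  have hPdeg : ∀ v, MvPolynomial.degreeOf v P ≤ Fintype.card F - 1 := by
    intro v
    refine le_trans ?_ (Nat.le_sub_one_of_lt hq)
    rw [hP]
    refine le_trans (MvPolynomial.degreeOf_prod_le _ _ _) ?_
    refine le_trans (Finset.sum_le_sum
      (fun S _ => auxPoly_degreeOf G0 Ghat hsr j0 S v)) ?_
    rw [Finset.sum_const, smul_eq_mul, mul_one]
    exact h𝒮card
  have hex : ∃ x : Fin r × Fin t → F, MvPolynomial.eval x P ≠ 0 := by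
    by_contra hcon
    push_neg at hcon
    apply hPne
    -- transfer to a variable type in the same universe as `F`
    have hup : Function.Injective (ULift.up : (Fin r × Fin t) → ULift (Fin r × Fin t)) :=
      fun a b h => congrArg ULift.down h
    have hP' : MvPolynomial.rename (ULift.up : (Fin r × Fin t) → ULift (Fin r × Fin t)) P = 0 := by
      refine MvPolynomial.eq_zero_of_eval_eq_zero _ F _ ?_ ?_
      · intro v
        rw [MvPolynomial.eval_rename]
        exact hcon _
      · rw [MvPolynomial.mem_restrictDegree]
        intro m hm i
        have hdeg : MvPolynomial.degreeOf i (MvPolynomial.rename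
            (ULift.up : (Fin r × Fin t) → ULift (Fin r × Fin t)) P) ≤ Fintype.card F - 1 := by
          obtain ⟨i⟩ := i
          rw [MvPolynomial.degreeOf_rename_of_injective hup]
          exact hPdeg i
        exact MvPolynomial.degreeOf_le_iff.mp hdeg m hm
    exact MvPolynomial.rename_injective _ hup (by rw [hP', map_zero])
  obtain ⟨x0, hx0⟩ := hex
  have hfac : ∀ S ∈ 𝒮, MvPolynomial.eval x0 (auxPoly G0 Ghat hsr j0 S) ≠ 0 := by
    intro S hSmem h0
    apply hx0
    rw [hP, map_prod]
    exact Finset.prod_eq_zero hSmem h0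
  -- Step 3: the MRSC property of `auxG G0 Ghat hsr x0`
  have hmrsc : ∀ S : Finset (Fin n), S.card = k → colRank G0 S = k →
      colRank (auxG G0 Ghat hsr x0) S = k := by
    intro S hS hrkS
    have hSmem : S ∈ 𝒮 := by
      rw [h𝒮, Finset.mem_filter]; exact ⟨Finset.mem_univ _, hS, hrkS⟩
    have hd := hfac S hSmem
    rw [auxPoly_eval] at hd
    rw [auxG_colRank G0 Ghat hsr j0 x0 S hS, aux_rank_of_det_ne_zero _ hd,
      Fintype.card_sum, Fintype.card_fin, Fintype.card_fin]
    exact hsr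
  -- Step 4: existence of one good set, and full rank
  have hexists : ∃ S : Finset (Fin n), S.card = k ∧ colRank G0 S = k := by
    obtain ⟨b, hbsub, hbspan, hbli⟩ := exists_linearIndependent F (Set.range G0ᵀ)
    have hbfin : b.Finite := (Set.finite_range G0ᵀ).subset hbsub
    haveI := hbfin.fintype
    have hbcard : b.toFinset.card = t := by
      have h1 : Module.finrank F (Submodule.span F b) = t := by
        rw [hbspan]
        change Module.finrank F (Submodule.span F (Set.range G0.col)) = t
        rw [← Matrix.rank_eq_finrank_span_cols, hG0]
      rwa [finrank_span_set_eq_card hbli] at h1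
    have hchoice : ∀ v : b, ∃ j : Fin n, G0ᵀ j = v.1 := fun v => hbsub v.2
    choose φ hφ using hchoice
    have hφinj : Function.Injective φ := by
      intro v1 v2 h
      apply Subtype.ext
      rw [← hφ v1, ← hφ v2, h]
    have hS'card : (Finset.univ.image φ).card = t := by
      rw [Finset.card_image_of_injective _ hφinj, Finset.card_univ]
      rw [Set.toFinset_card] at hbcard
      exact hbcard
    obtain ⟨S₀, hS₀sub, hS₀card⟩ :=
      Finset.exists_subset_card_eq (s := Finset.univ.image φ) (n := k) (by rw [hS'card]; exact hkt.le)
    have hmem : ∀ j : S₀, G0ᵀ (j : Fin n) ∈ b := by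
      intro j
      have hj : (j : Fin n) ∈ Finset.univ.image φ := hS₀sub j.2
      obtain ⟨v, -, hv⟩ := Finset.mem_image.mp hj
      rw [← hv, hφ v]
      exact v.2
    have hcols : LinearIndependent F (fun j : S₀ => G0ᵀ (j : Fin n)) := by
      have hginj : Function.Injective (fun j : S₀ => (⟨G0ᵀ (j : Fin n), hmem j⟩ : b)) := by
        intro j1 j2 hg
        have heq : G0ᵀ (j1 : Fin n) = G0ᵀ (j2 : Fin n) := congrArg Subtype.val hg
        obtain ⟨v1, -, hv1⟩ := Finset.mem_image.mp (hS₀sub j1.2)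
        obtain ⟨v2, -, hv2⟩ := Finset.mem_image.mp (hS₀sub j2.2)
        have e1 : v1.1 = G0ᵀ (j1 : Fin n) := by rw [← hv1, hφ v1]
        have e2 : v2.1 = G0ᵀ (j2 : Fin n) := by rw [← hv2, hφ v2]
        have hv12 : v1 = v2 := Subtype.ext (by rw [e1, e2, heq])
        apply Subtype.ext
        rw [← hv1, ← hv2, hv12]
      exact hbli.comp _ hginj
    exact ⟨S₀, hS₀card, by rw [aux_colRank_of_li hcols, hS₀card]⟩
  have hrank : (auxG G0 Ghat hsr x0).rank = k := by
    apply le_antisymm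
    · exact le_trans (Matrix.rank_le_card_height _) (le_of_eq (Fintype.card_fin k))
    · obtain ⟨S₀, hS₀c, hS₀r⟩ := hexists
      have h1 := hmrsc S₀ hS₀c hS₀r
      rw [colRank] at h1
      have h2 := aux_rank_submatrix_col_le (auxG G0 Ghat hsr x0) (fun j : S₀ => (j : Fin n))
      rw [h1] at h2
      exact h2
  -- Step 5: sandwiching
  have hsub1 : ∀ i, Ghat i ∈ rowSpan (auxG G0 Ghat hsr x0) := by
    intro i
    have h1 : Ghat i =
        auxG G0 Ghat hsr x0 ((finSumFinEquiv.trans (finCongr hsr)) (Sum.inl i)) := by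
      funext j
      simp [auxG, Equiv.symm_apply_apply, auxRow]
    rw [h1, rowSpan]
    exact Submodule.subset_span ⟨_, rfl⟩
  have hsub2 : ∀ a, auxG G0 Ghat hsr x0 a ∈ rowSpan G0 := by
    intro a
    rcases hcase : (finSumFinEquiv.trans (finCongr hsr)).symm a with i | i
    · have h1 : auxG G0 Ghat hsr x0 a = Ghat i := by
        funext j
        show auxRow G0 Ghat x0 ((finSumFinEquiv.trans (finCongr hsr)).symm a) j = Ghat i j
        rw [hcase]
        simp [auxRow]
      rw [h1]; exact hsub i
    · have h1 : auxG G0 Ghat hsr x0 a = ∑ l, x0 (i, l) • G0 l := by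
        funext j
        show auxRow G0 Ghat x0 ((finSumFinEquiv.trans (finCongr hsr)).symm a) j =
          (∑ l, x0 (i, l) • G0 l) j
        rw [hcase]
        simp [auxRow, Finset.sum_apply]
      rw [h1, rowSpan]
      exact Submodule.sum_mem _ fun l _ =>
        Submodule.smul_mem _ _ (Submodule.subset_span ⟨l, rfl⟩)
  exact ⟨auxG G0 Ghat hsr x0, hrank, hsub1, hsub2, hmrsc⟩
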